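/- Let c* > 0 and 0 < ε < 1/(2ω). (i) If Λ_ε ≤ c*/ε, then x² + y² ≤ 4c*/ε. (ii) If R ≥ 0 is such that x² + y² ≤ R² and moreover ε ≤ κ·c*/(2κ·R² + 4·F²), then Λ_ε ≤ c*/ε. -/

import Mathlib

set_option maxHeartbeats 1000000


/-- (i) If `Λ_ε ≤ c*/ε` then `x² + y² ≤ 4c*/ε`; (ii) if
`x² + y² ≤ R²` and `ε ≤ κc*/(2κR² + 4F²)` then `Λ_ε ≤ c*/ε`. -/
theorem stmt11 (ω κ F x y p q : ℝ)
    (hω : 1 ≤ ω) (hκ : 0 < κ) (hF : 0 ≤ F) (hx : 0 ≤ x) (hy : 0 ≤ y)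
    (hp : |p| ≤ (2 / Real.sqrt κ) * F * y) (hq : |q| ≤ ω * x * y)
    (Λ : ℝ → ℝ)
    (hΛ : ∀ ε : ℝ, Λ ε = x ^ 2 + y ^ 2 + p + (2 / κ) * F ^ 2 - ε * q)
    (cstar : ℝ) (hcstar : 0 < cstar)
    (ε : ℝ) (hε0 : 0 < ε) (hε1 : ε < 1 / (2 * ω)) :
    (Λ ε ≤ cstar / ε → x ^ 2 + y ^ 2 ≤ 4 * cstar / ε) ∧
    (∀ R : ℝ, 0 ≤ R → x ^ 2 + y ^ 2 ≤ R ^ 2 →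
      ε ≤ κ * cstar / (2 * κ * R ^ 2 + 4 * F ^ 2) → Λ ε ≤ cstar / ε) := by
  set s := Real.sqrt κ with hsdef
  have hs : 0 < s := Real.sqrt_pos.mpr hκ
  have hs2 : s ^ 2 = κ := Real.sq_sqrt hκ.le
  have hω0 : 0 < ω := lt_of_lt_of_le one_pos hω
  have hεω : ε * ω < 1 / 2 := by
    rw [lt_div_iff₀ (by positivity : (0:ℝ) < 2 * ω)] at hε1
    nlinarith
  obtain ⟨hp1, hp2⟩ := abs_le.mp hp
  obtain ⟨hq1, hq2⟩ := abs_le.mp hq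
  have hkey : (2 / s) * F * y ≤ (2 / κ) * F ^ 2 + y ^ 2 / 2 := by
    have h3 : 2 * F * y * s ≤ 2 * F ^ 2 + s ^ 2 * y ^ 2 / 2 := by
      nlinarith [sq_nonneg (2 * F - s * y)]
    have h4 : (2 / s) * F * y = (2 * F * y * s) / κ := by
      rw [← hs2]; field_simp
    rw [h4, div_le_iff₀ hκ]
    have h5 : ((2 / κ) * F ^ 2 + y ^ 2 / 2) * κ = 2 * F ^ 2 + y ^ 2 * κ / 2 := by
      field_simp
    rw [h5, ← hs2]
    nlinarith
  have hmix : ε * |q| ≤ (x ^ 2 + y ^ 2) / 4 := by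
    have h1 : ε * |q| ≤ ε * (ω * x * y) :=
      mul_le_mul_of_nonneg_left hq hε0.le
    nlinarith [sq_nonneg (x - y), mul_nonneg hx hy, abs_nonneg q]
  have habs : -(ε * q) ≤ ε * |q| := by nlinarith [neg_abs_le q]
  have habs2 : ε * q ≤ ε * |q| := mul_le_mul_of_nonneg_left (le_abs_self q) hε0.le
  constructor
  · intro h
    rw [hΛ] at h
    have hΛge : (x ^ 2 + y ^ 2) / 4 ≤ cstar / ε := by linarith [sq_nonneg x]
    calc x ^ 2 + y ^ 2 = 4 * ((x ^ 2 + y ^ 2) / 4) := by ring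
      _ ≤ 4 * (cstar / ε) := by linarith
      _ = 4 * cstar / ε := by ring
  · intro R hR hRx hεR
    set D := 2 * κ * R ^ 2 + 4 * F ^ 2 with hD
    have hD0 : 0 ≤ D := by positivity
    rcases eq_or_lt_of_le hD0 with hD1 | hD1
    · exfalso
      rw [← hD1, div_zero] at hεR
      linarith
    · have h1 : ε * D ≤ κ * cstar := by
        rw [le_div_iff₀ hD1] at hεR; linarith
      have h2 : 2 * R ^ 2 + 4 * F ^ 2 / κ ≤ cstar / ε := by
        rw [le_div_iff₀ hε0]
        have h5 : (2 * R ^ 2 + 4 * F ^ 2 / κ) * ε * κ = ε * D := by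
          rw [hD]; field_simp
        rw [← mul_le_mul_iff_of_pos_right hκ, h5]
        linarith
      rw [hΛ]
      have hb1 : x ^ 2 + y ^ 2 + p + (2 / κ) * F ^ 2 - ε * q
          ≤ 7 / 4 * (x ^ 2 + y ^ 2) + 4 * F ^ 2 / κ := by
        have e1 : (2 / κ) * F ^ 2 + (2 / κ) * F ^ 2 = 4 * F ^ 2 / κ := by ring
        linarith [sq_nonneg x]
      clear_value s D
      linarith only [sq_nonneg R, hb1, h2, hRx]
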